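/- Let X be a complex Banach space, G ⊆ X a bounded balanced domain, and f : G → ℂ a holomorphic function whose values lie in the right half-plane ℍ = {z : Re z > 0}, with power series expansion f(x) = f(0) + Σ_{m≥1} (1/m!) D^m f(0)(x^m) in a neighbourhood of the origin. Then for every y ∈ G and every m ≥ 1, |(1/m!) D^m f(0)(y^m)| ≤ 2·Re f(0). -/

import Mathlib

open scoped Pointwise

section HalfPlaneHelpers

open Complex Metric Real MeasureTheory intervalIntegral
open scoped ENNReal NNReal

open scoped ENNReal NNReal

private lemma conj_intervalIntegral' (f : ℝ → ℂ) (a b : ℝ) :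
    (starRingEnd ℂ) (∫ x in a..b, f x) = ∫ x in a..b, (starRingEnd ℂ) (f x) := by
  simp only [intervalIntegral, map_sub, ← integral_conj]

private lemma onevar_bound (g : ℂ → ℂ) (hg : DifferentiableOn ℂ g (closedBall 0 1))
    (hre : ∀ z ∈ sphere (0:ℂ) 1, 0 ≤ (g z).re) (m : ℕ) (hm : 1 ≤ m) :
    ‖(cauchyPowerSeries g 0 1) m (fun _ => 1)‖ ≤ 2 * (g 0).re := by
  set e : ℝ → ℂ := fun θ => circleMap 0 1 θ with he
  have he1 : ∀ θ, e θ ∈ sphere (0:ℂ) 1 := circleMap_mem_sphere 0 zero_le_one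
  have hene : ∀ θ, e θ ≠ 0 := fun θ => circleMap_ne_center one_ne_zero
  have hcontg : Continuous fun θ => g (e θ) :=
    hg.continuousOn.comp_continuous (continuous_circleMap 0 1)
      (fun θ => sphere_subset_closedBall (he1 θ))
  have habs : ∀ θ, ‖e θ‖ = 1 := fun θ => by
    simpa using mem_sphere_zero_iff_norm.mp (he1 θ)
  have key : ∀ h : ℂ → ℂ, (∮ z in C(0,1), h z) = ∫ θ in (0:ℝ)..2*π, (e θ * I) * h (e θ) := by
    intro h
    simp [circleIntegral, deriv_circleMap, smul_eq_mul, he]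
  -- coefficient formula
  have hcoeff : ∀ n : ℕ, (cauchyPowerSeries g 0 1) n (fun _ => (1:ℂ)) =
      (2*(π:ℂ))⁻¹ * ∫ θ in (0:ℝ)..2*π, (e θ)⁻¹^n * g (e θ) := by
    intro n
    rw [cauchyPowerSeries_apply, key]
    have h1 : ∀ θ : ℝ, (e θ * I) * (((1:ℂ) / (e θ - 0))^n • ((e θ - 0)⁻¹ • g (e θ)))
        = I * ((e θ)⁻¹^n * g (e θ)) := by
      intro θ
      have h0 := hene θ
      simp only [sub_zero, smul_eq_mul, one_div]
      field_simp
    have h2 : (∫ θ in (0:ℝ)..2*π, (e θ * I) * (((1:ℂ) / (e θ - 0))^n • ((e θ - 0)⁻¹ • g (e θ))))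
        = I * ∫ θ in (0:ℝ)..2*π, (e θ)⁻¹^n * g (e θ) := by
      rw [← intervalIntegral.integral_const_mul]
      exact intervalIntegral.integral_congr (fun θ _ => h1 θ)
    rw [h2, smul_eq_mul]
    have : (2*(π:ℂ)*I)⁻¹ * I = (2*(π:ℂ))⁻¹ := by
      rw [mul_inv, mul_comm, mul_comm ((2 * (π:ℂ))⁻¹) I⁻¹, ← mul_assoc,
        mul_inv_cancel₀ I_ne_zero, one_mul]
    rw [← mul_assoc, this]
  have hconte : Continuous e := continuous_circleMap 0 1
  -- vanishing integral (Cauchy's theorem)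
  have hvan : (∫ θ in (0:ℝ)..2*π, (e θ)^m * g (e θ)) = 0 := by
    have h0 : (∮ z in C(0,1), z^(m-1) * g z) = 0 := by
      apply circleIntegral_eq_zero_of_differentiable_on_off_countable zero_le_one
        Set.countable_empty ((continuous_pow (m-1)).continuousOn.mul hg.continuousOn)
      intro z hz
      have hz1 : z ∈ ball (0:ℂ) 1 := hz.1
      have hdg : DifferentiableAt ℂ g z := hg.differentiableAt
        (mem_nhds_iff.mpr ⟨ball 0 1, ball_subset_closedBall, isOpen_ball, hz1⟩)
      exact (differentiableAt_pow _).mul hdg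
    rw [key] at h0
    have h1 : ∀ θ ∈ Set.uIcc (0:ℝ) (2*π),
        (e θ * I) * ((e θ)^(m-1) * g (e θ)) = I * ((e θ)^m * g (e θ)) := by
      intro θ _
      have hpow : e θ * (e θ)^(m-1) = (e θ)^m := by
        rw [← pow_succ', Nat.sub_add_cancel hm]
      calc (e θ * I) * ((e θ)^(m-1) * g (e θ))
          = I * ((e θ * (e θ)^(m-1)) * g (e θ)) := by ring
        _ = I * ((e θ)^m * g (e θ)) := by rw [hpow]
    rw [intervalIntegral.integral_congr h1, intervalIntegral.integral_const_mul] at h0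
    exact (mul_eq_zero.mp h0).resolve_left I_ne_zero
  -- conjugate of points on the circle
  have hconje : ∀ θ, (starRingEnd ℂ) (e θ) = (e θ)⁻¹ := by
    intro θ
    have hns : Complex.normSq (e θ) = 1 := by
      rw [Complex.normSq_eq_norm_sq]
      simp [he]
    rw [Complex.inv_def, hns]
    simp
  have hconj0 : (∫ θ in (0:ℝ)..2*π, (e θ)⁻¹^m * (starRingEnd ℂ) (g (e θ))) = 0 := by
    have h2 : ∀ θ ∈ Set.uIcc (0:ℝ) (2*π), (e θ)⁻¹^m * (starRingEnd ℂ) (g (e θ))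
        = (starRingEnd ℂ) ((e θ)^m * g (e θ)) := by
      intro θ _; rw [map_mul, map_pow, hconje]
    rw [intervalIntegral.integral_congr h2, ← conj_intervalIntegral', hvan, map_zero]
  -- integrability facts
  have c1 : Continuous fun θ => (e θ)⁻¹^m := (hconte.inv₀ hene).pow m
  -- main identity
  have hsplit : (∫ θ in (0:ℝ)..2*π, (e θ)⁻¹^m * g (e θ))
      = ∫ θ in (0:ℝ)..2*π, (e θ)⁻¹^m * (2 * ((g (e θ)).re : ℂ)) := by
    have hstep : (∫ θ in (0:ℝ)..2*π, (e θ)⁻¹^m * g (e θ))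
        = (∫ θ in (0:ℝ)..2*π, (e θ)⁻¹^m * g (e θ))
          + ∫ θ in (0:ℝ)..2*π, (e θ)⁻¹^m * (starRingEnd ℂ) (g (e θ)) := by
      rw [hconj0, add_zero]
    have c2 : Continuous fun θ => (starRingEnd ℂ) (g (e θ)) :=
      Complex.continuous_conj.comp hcontg
    rw [hstep, ← intervalIntegral.integral_add (f := fun θ => (e θ)⁻¹^m * g (e θ))
      (g := fun θ => (e θ)⁻¹^m * (starRingEnd ℂ) (g (e θ))) ((c1.mul hcontg).intervalIntegrable _ _)
      ((c1.mul c2).intervalIntegrable _ _)]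
    apply intervalIntegral.integral_congr
    intro θ _
    show (e θ)⁻¹ ^ m * g (e θ) + (e θ)⁻¹ ^ m * (starRingEnd ℂ) (g (e θ))
        = (e θ)⁻¹ ^ m * (2 * ((g (e θ)).re : ℂ))
    rw [← mul_add, Complex.add_conj]
    push_cast
    ring
  -- mean value property for the real part
  have hmean : (g 0).re = (2*π)⁻¹ * ∫ θ in (0:ℝ)..2*π, (g (e θ)).re := by
    have hq : HasFPowerSeriesOnBall g (cauchyPowerSeries g 0 1) 0 1 := by
      have := hg.hasFPowerSeriesOnBall (R := 1) one_pos
      simpa using this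
    have h0 : g 0 = (cauchyPowerSeries g 0 1) 0 (fun _ => 1) := (hq.coeff_zero _).symm
    rw [hcoeff 0] at h0
    simp only [pow_zero, one_mul] at h0
    have hI : (∫ θ in (0:ℝ)..2*π, g (e θ)).re = ∫ θ in (0:ℝ)..2*π, (g (e θ)).re :=
      (ContinuousLinearMap.intervalIntegral_comp_comm Complex.reCLM
        (hcontg.intervalIntegrable _ _)).symm
    have hc : (2*(π:ℂ))⁻¹ = (((2*π)⁻¹ : ℝ) : ℂ) := by push_cast; ring
    rw [h0, hc, Complex.re_ofReal_mul, hI]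
  -- the final estimate
  have hn2 : ‖(2*(π:ℂ))⁻¹‖ = (2*π)⁻¹ := by
    rw [norm_inv]
    have : (2*(π:ℂ)) = (((2*π) : ℝ) : ℂ) := by push_cast; ring
    rw [this, Complex.norm_real, Real.norm_eq_abs, abs_of_pos Real.two_pi_pos]
  calc ‖(cauchyPowerSeries g 0 1) m (fun _ => 1)‖
      = ‖(2*(π:ℂ))⁻¹‖ * ‖∫ θ in (0:ℝ)..2*π, (e θ)⁻¹^m * (2*((g (e θ)).re:ℂ))‖ := by
        rw [hcoeff m, hsplit, norm_mul]
    _ ≤ (2*π)⁻¹ * ∫ θ in (0:ℝ)..2*π, ‖(e θ)⁻¹^m * (2*((g (e θ)).re:ℂ))‖ := by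
        rw [hn2]
        exact mul_le_mul_of_nonneg_left
          (intervalIntegral.norm_integral_le_integral_norm Real.two_pi_pos.le)
          (by positivity)
    _ = (2*π)⁻¹ * ∫ θ in (0:ℝ)..2*π, 2 * (g (e θ)).re := by
        congr 1
        apply intervalIntegral.integral_congr
        intro θ _
        show ‖(e θ)⁻¹ ^ m * (2 * ((g (e θ)).re : ℂ))‖ = 2 * (g (e θ)).re
        rw [norm_mul, norm_pow, norm_inv, habs θ]
        have h2r : ((2:ℂ) * ((g (e θ)).re : ℂ)) = (((2 * (g (e θ)).re : ℝ)) : ℂ) := by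
          push_cast; ring
        rw [h2r, Complex.norm_real]
        have h0r : (0:ℝ) ≤ 2 * (g (e θ)).re := by have := hre _ (he1 θ); linarith
        simp [_root_.abs_of_nonneg h0r, hre _ (he1 θ)]
    _ = 2 * ((2*π)⁻¹ * ∫ θ in (0:ℝ)..2*π, (g (e θ)).re) := by
        rw [intervalIntegral.integral_const_mul]; ring
    _ = 2 * (g 0).re := by rw [← hmean]


end HalfPlaneHelpers

section Main

open Complex Metric Real MeasureTheory intervalIntegral
open scoped ENNReal NNReal

/-- Coefficient bound for holomorphic maps from a bounded balanced domain `G` in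
a complex Banach space into the right half-plane: for every `y ∈ G` and `m ≥ 1`,
`|(1/m!) Dᵐf(0)(yᵐ)| ≤ 2 Re f(0)`. -/
theorem halfPlane_coeff_bound {X : Type*} [NormedAddCommGroup X] [NormedSpace ℂ X]
    [CompleteSpace X]
    (G : Set X) (hGopen : IsOpen G) (hGconn : IsConnected G)
    (hGbdd : Bornology.IsBounded G)
    (hGbal : ∀ z : ℂ, ‖z‖ ≤ 1 → z • G ⊆ G)
    (f : X → ℂ) (hf : DifferentiableOn ℂ f G)
    (hmaps : Set.MapsTo f G {z : ℂ | 0 < z.re})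
    (p : FormalMultilinearSeries ℂ X ℂ) (hp : HasFPowerSeriesAt f p 0)
    (y : X) (hy : y ∈ G) :
    ∀ m : ℕ, 1 ≤ m → ‖p m (fun _ => y)‖ ≤ 2 * (f 0).re := by
  intro m hm
  set L : ℂ →L[ℂ] X := ContinuousLinearMap.toSpanSingleton ℂ y with hL
  set g : ℂ → ℂ := fun z => f (z • y) with hgdef
  set q : FormalMultilinearSeries ℂ ℂ ℂ := p.compContinuousLinearMap L with hq
  obtain ⟨r, hball⟩ := hp
  have hr0 : 0 < r := hball.r_pos
  have hy1 : ((‖y‖₊ : ℝ≥0∞) + 1) ≠ 0 := by simp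
  have hy2 : ((‖y‖₊ : ℝ≥0∞) + 1) ≠ ⊤ := by simp
  obtain ⟨t, ht0, htlt⟩ : ∃ t : ℝ≥0, 0 < t ∧ (t : ℝ≥0∞) < r / ((‖y‖₊ : ℝ≥0∞) + 1) := by
    have hpos : 0 < r / ((‖y‖₊ : ℝ≥0∞) + 1) := ENNReal.div_pos hr0.ne' hy2
    obtain ⟨t, ht1, ht2⟩ := ENNReal.lt_iff_exists_nnreal_btwn.mp hpos
    exact ⟨t, by exact_mod_cast ht1, ht2⟩
  have htr : (t : ℝ≥0∞) * ((‖y‖₊ : ℝ≥0∞) + 1) < r := by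
    rw [← ENNReal.lt_div_iff_mul_lt (Or.inl hy1) (Or.inl hy2)]
    exact htlt
  have hqy : ∀ n, ‖q n‖ ≤ ‖p n‖ * ‖y‖ ^ n := by
    intro n
    calc ‖q n‖ ≤ ‖p n‖ * ∏ _i : Fin n, ‖L‖ :=
          ContinuousMultilinearMap.norm_compContinuousLinearMap_le _ _
      _ = ‖p n‖ * ‖y‖ ^ n := by
          rw [Finset.prod_const, Finset.card_univ, Fintype.card_fin, hL,
            ContinuousLinearMap.norm_toSpanSingleton]
  have hrad : (t : ℝ≥0∞) ≤ q.radius := by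
    apply FormalMultilinearSeries.le_radius_of_summable
    have hsum : Summable fun n => ‖p n‖ * ((t * ‖y‖₊ : ℝ≥0) : ℝ) ^ n := by
      apply p.summable_norm_mul_pow
      calc ((t * ‖y‖₊ : ℝ≥0) : ℝ≥0∞) = (t : ℝ≥0∞) * (‖y‖₊ : ℝ≥0∞) := by
            rw [ENNReal.coe_mul]
        _ ≤ (t : ℝ≥0∞) * ((‖y‖₊ : ℝ≥0∞) + 1) := by gcongr; exact le_self_add
        _ < r := htr
        _ ≤ p.radius := hball.r_le
    apply Summable.of_nonneg_of_le (fun n => by positivity) _ hsum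
    intro n
    calc ‖q n‖ * (t : ℝ) ^ n ≤ (‖p n‖ * ‖y‖ ^ n) * (t : ℝ) ^ n :=
          mul_le_mul_of_nonneg_right (hqy n) (by positivity)
      _ = ‖p n‖ * ((t * ‖y‖₊ : ℝ≥0) : ℝ) ^ n := by push_cast; ring
  have happ : ∀ (z : ℂ) n, (q n fun _ => z) = p n fun _ => z • y := by
    intro z n
    rw [hq, FormalMultilinearSeries.compContinuousLinearMap_apply]
    congr 1
  have hgq : HasFPowerSeriesAt g q 0 := by
    refine ⟨t, hrad, ENNReal.coe_pos.mpr ht0, ?_⟩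
    intro z hz
    have hz' : (‖z‖₊ : ℝ≥0∞) < t := by
      have hz2 := Metric.mem_eball.mp hz
      rwa [edist_eq_enorm_sub, sub_zero, enorm_eq_nnnorm] at hz2
    have hzy : z • y ∈ Metric.eball (0 : X) r := by
      rw [Metric.mem_eball, edist_eq_enorm_sub, sub_zero, enorm_eq_nnnorm, nnnorm_smul, ENNReal.coe_mul]
      calc (‖z‖₊ : ℝ≥0∞) * (‖y‖₊ : ℝ≥0∞) ≤ (‖z‖₊ : ℝ≥0∞) * ((‖y‖₊ : ℝ≥0∞) + 1) := by
            gcongr; exact le_self_add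
        _ < (t : ℝ≥0∞) * ((‖y‖₊ : ℝ≥0∞) + 1) := by
            exact ENNReal.mul_lt_mul_left hy1 hy2 hz'
        _ < r := htr
    have hs := hball.hasSum hzy
    simp only [zero_add] at hs
    simpa [happ z, hgdef] using hs
  have hmapsG : ∀ z : ℂ, ‖z‖ ≤ 1 → z • y ∈ G := fun z hz =>
    hGbal z hz (Set.smul_mem_smul_set hy)
  have hgdiff : DifferentiableOn ℂ g (closedBall 0 1) := by
    apply DifferentiableOn.comp hf ((differentiable_id.smul_const y).differentiableOn)
    intro z hz
    exact hmapsG z (by simpa [mem_closedBall_zero_iff] using hz)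
  have hre : ∀ z ∈ sphere (0 : ℂ) 1, 0 ≤ (g z).re := by
    intro z hz
    exact (hmaps (hmapsG z (le_of_eq (mem_sphere_zero_iff_norm.mp hz)))).le
  have hequ : q = cauchyPowerSeries g 0 1 := by
    have h2 : HasFPowerSeriesOnBall g (cauchyPowerSeries g 0 1) 0 1 := by
      have := hgdiff.hasFPowerSeriesOnBall (R := 1) one_pos
      simpa using this
    exact hgq.eq_formalMultilinearSeries h2.hasFPowerSeriesAt
  have hpq : (p m fun _ => y) = (cauchyPowerSeries g 0 1) m fun _ => (1 : ℂ) := by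
    rw [← hequ, happ 1 m]
    simp
  have hf0 : f 0 = g 0 := by simp [hgdef]
  rw [hpq, hf0]
  exact onevar_bound g hgdiff hre m hm

end Main
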